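/- Let U be a finite set of unit vectors in ℝ² with pos(U) = ℝ², and let u ∈ U_□ (i.e., no v, w ∈ U satisfy pos{u,v,w} = ℝ²). Then there exists an open hemisphere ω ⊂ S¹ (i.e., ω = {x ∈ S¹ : ⟨x, c⟩ < 0} for some unit vector c) such that U ∩ ω = {−u}. In particular, −u ∈ U. -/

import Mathlib

open RealInnerProductSpace

noncomputable section

abbrev V2 : Type := EuclideanSpace ℝ (Fin 2)

/-- The positive hull: all nonnegative linear combinations of elements of `M`. -/
def pos {E : Type*} [AddCommMonoid E] [Module ℝ E] (M : Set E) : Set E :=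
  {x | ∃ (s : Finset E) (c : E → ℝ),
    (↑s : Set E) ⊆ M ∧ (∀ v, 0 ≤ c v) ∧ x = ∑ v ∈ s, c v • v}

private def Xc (u v : V2) : ℝ := v 0 * u 0 + v 1 * u 1
private def Yc (u v : V2) : ℝ := v 0 * u 1 - v 1 * u 0

private def mk2 (a b : ℝ) : V2 := (WithLp.equiv 2 (Fin 2 → ℝ)).symm ![a, b]

private lemma mk2_zero (a b : ℝ) : mk2 a b 0 = a := rfl
private lemma mk2_one (a b : ℝ) : mk2 a b 1 = b := rfl

private lemma inner2 (v w : V2) : (inner ℝ v w : ℝ) = v 0 * w 0 + v 1 * w 1 := by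
  simp [PiLp.inner_apply, Fin.sum_univ_two, RCLike.inner_apply, conj_trivial]
  ring

private lemma unit_sq {v : V2} (h : ‖v‖ = 1) : v 0 ^ 2 + v 1 ^ 2 = 1 := by
  have h2 : (inner ℝ v v : ℝ) = ‖v‖ ^ 2 := real_inner_self_eq_norm_sq v
  rw [inner2, h] at h2
  nlinarith [h2]

private lemma lagrange {u v : V2} (hu : u 0 ^ 2 + u 1 ^ 2 = 1)
    (hv : v 0 ^ 2 + v 1 ^ 2 = 1) : Xc u v ^ 2 + Yc u v ^ 2 = 1 := by
  unfold Xc Yc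
  linear_combination (v 0 ^ 2 + v 1 ^ 2) * hu + hv

private lemma negu_of {u v : V2} (hu : u 0 ^ 2 + u 1 ^ 2 = 1)
    (hY : Yc u v = 0) (hX : Xc u v = -1) : v = -u := by
  have e0 : (-u : V2) 0 = -(u 0) := rfl
  have e1 : (-u : V2) 1 = -(u 1) := rfl
  unfold Xc at hX
  unfold Yc at hY
  refine PiLp.ext fun i => ?_
  fin_cases i
  · show v 0 = (-u : V2) 0
    rw [e0]
    linear_combination (-(v 0)) * hu + u 0 * hX + u 1 * hY
  · show v 1 = (-u : V2) 1
    rw [e1]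
    linear_combination (-(v 1)) * hu + u 1 * hX - u 0 * hY

private lemma tri {x1 y1 x2 y2 : ℝ} (h1 : x1^2+y1^2=1) (h2 : x2^2+y2^2=1)
    (hy1 : 0 < y1) (hy2 : 0 < y2) (hle : x2 ≤ x1) : 0 ≤ x1*y2 - y1*x2 := by
  rcases le_or_gt 0 x2 with h | h
  · nlinarith [sq_nonneg (x1*y2 - y1*x2), sq_nonneg (x1*y2 + y1*x2), mul_pos hy1 hy2,
      mul_nonneg h (le_trans h hle)]
  · rcases le_or_gt 0 x1 with h' | h'
    · nlinarith [mul_nonneg h' hy2.le, mul_pos hy1 (neg_pos.mpr h)]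
    · by_contra hc
      push_neg at hc
      have h3 : 0 < (-x1)*y2 := mul_pos (by linarith) hy2
      have h4 : 0 < y1*(-x2) := mul_pos hy1 (by linarith)
      have h5 : x1^2 - x2^2 ≤ 0 := by nlinarith
      nlinarith [mul_pos (show 0 < -(x1*y2 - y1*x2) by linarith)
        (show 0 < -(x1*y2 + y1*x2) by nlinarith)]

private lemma pos_inner_nonneg {U : Set V2} {g : V2} (h : ∀ v ∈ U, 0 ≤ (inner ℝ v g : ℝ))
    {z : V2} (hz : z ∈ pos U) : 0 ≤ (inner ℝ z g : ℝ) := by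
  obtain ⟨s, co, hs, hnn, rfl⟩ := hz
  rw [sum_inner]
  exact Finset.sum_nonneg fun i hi => by
    rw [real_inner_smul_left]; exact mul_nonneg (hnn i) (h i (hs hi))
private lemma span_triple {u v w : V2} (hu : u 0 ^ 2 + u 1 ^ 2 = 1)
    (hyv : 0 < Yc u v) (hyw : Yc u w < 0)
    (hD : Xc u w * Yc u v - Yc u w * Xc u v < 0) :
    pos {u, v, w} = Set.univ := by
  classical
  have hYu : Yc u u = 0 := by unfold Yc; ring
  have huv : u ≠ v := fun h => by rw [← h, hYu] at hyv; exact lt_irrefl 0 hyv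
  have huw : u ≠ w := fun h => by rw [← h, hYu] at hyw; exact lt_irrefl 0 hyw
  have hvw : v ≠ w := fun h => by rw [← h] at hyw; linarith
  rw [Set.eq_univ_iff_forall]
  intro z
  set α : ℝ := -(Xc u w * Yc u v - Yc u w * Xc u v) with hαdef
  have hα : 0 < α := by simp [hαdef]; linarith
  set γ : ℝ := Yc u v with hγdef
  have hγ : 0 < γ := hyv
  set s : ℝ := -(Yc u w) with hsdef
  have hs : 0 < s := by simp [hsdef]; linarith
  set base : ℝ := -(Yc u w) * Xc u z + Yc u z * Xc u w with hbase
  have key : ∀ m : ℝ, s • z = (base + m * α) • u + (m * s) • v + (-(Yc u z) + m * γ) • w := by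
    intro m
    refine PiLp.ext fun i => ?_
    fin_cases i
    · show s * z 0 = (base + m * α) * u 0 + (m * s) * v 0 + (-(Yc u z) + m * γ) * w 0
      simp only [hαdef, hγdef, hsdef, hbase, Xc, Yc]
      linear_combination (((z 0*u 1 - z 1*u 0) * w 0 - (w 0*u 1 - w 1*u 0) * z 0) + m * ((w 0*u 1 - w 1*u 0) * v 0 - (v 0*u 1 - v 1*u 0) * w 0) + 2*u 0*((w 0*z 1 - w 1*z 0) - m*(w 0*v 1 - w 1*v 0))) * hu
    · show s * z 1 = (base + m * α) * u 1 + (m * s) * v 1 + (-(Yc u z) + m * γ) * w 1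
      simp only [hαdef, hγdef, hsdef, hbase, Xc, Yc]
      linear_combination (((z 0*u 1 - z 1*u 0) * w 1 - (w 0*u 1 - w 1*u 0) * z 1) + m * ((w 0*u 1 - w 1*u 0) * v 1 - (v 0*u 1 - v 1*u 0) * w 1) + 2*u 1*((w 0*z 1 - w 1*z 0) - m*(w 0*v 1 - w 1*v 0))) * hu
  set M : ℝ := |base| / α + |Yc u z| / γ with hMdef
  have hM0 : 0 ≤ M := by positivity
  have hMα : |base| ≤ M * α := by
    have h1 : |base| / α * α = |base| := div_mul_cancel₀ _ hα.ne'
    have h2 : 0 ≤ |Yc u z| / γ * α := by positivity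
    calc |base| = |base| / α * α := h1.symm
    _ ≤ M * α := by rw [hMdef]; nlinarith
  have hMγ : |Yc u z| ≤ M * γ := by
    have h1 : |Yc u z| / γ * γ = |Yc u z| := div_mul_cancel₀ _ hγ.ne'
    have h2 : 0 ≤ |base| / α * γ := by positivity
    calc |Yc u z| = |Yc u z| / γ * γ := h1.symm
    _ ≤ M * γ := by rw [hMdef]; nlinarith
  have hA0 : 0 ≤ base + M * α := by nlinarith [neg_abs_le base]
  have hB0 : 0 ≤ M * s := by positivity
  have hC0 : 0 ≤ -(Yc u z) + M * γ := by nlinarith [le_abs_self (Yc u z)]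
  refine ⟨{u, v, w}, fun t =>
    if t = u then (base + M * α) / s else if t = v then (M * s) / s
    else if t = w then (-(Yc u z) + M * γ) / s else 0, ?_, ?_, ?_⟩
  · intro t ht; simpa using ht
  · intro t
    dsimp only
    split_ifs
    · exact div_nonneg hA0 hs.le
    · exact div_nonneg hB0 hs.le
    · exact div_nonneg hC0 hs.le
    · exact le_refl 0
  · dsimp only
    rw [Finset.sum_insert (by simp [huv, huw]), Finset.sum_insert (by simp [hvw]),
      Finset.sum_singleton]
    rw [if_pos rfl, if_neg (Ne.symm huv), if_pos rfl, if_neg (Ne.symm huw),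
      if_neg (Ne.symm hvw), if_pos rfl]
    have h3 := congrArg (fun t : V2 => s⁻¹ • t) (key M)
    simp only [smul_smul, smul_add] at h3
    rw [inv_mul_cancel₀ hs.ne', one_smul] at h3
    rw [div_eq_inv_mul, div_eq_inv_mul, div_eq_inv_mul]
    rw [← add_assoc]; exact h3

/-- If `u ∈ U_□`, there is an open hemisphere `ω = {x ∈ S¹ : ⟪x,c⟫ < 0}` with
`U ∩ ω = {-u}`; in particular `-u ∈ U`. -/
theorem stmt3 (U : Set V2) (hfin : U.Finite) (hunit : ∀ v ∈ U, ‖v‖ = 1)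
    (hpos : pos U = Set.univ) (u : V2) (hu : u ∈ U)
    (hsq : ¬ ∃ v ∈ U, ∃ w ∈ U, pos {u, v, w} = Set.univ) :
    (∃ c : V2, ‖c‖ = 1 ∧ U ∩ {x | (inner ℝ x c : ℝ) < 0} = {-u}) ∧ -u ∈ U := by
  classical
  have hu2 : u 0 ^ 2 + u 1 ^ 2 = 1 := unit_sq (hunit u hu)
  have hstar : ∀ v ∈ U, ∀ w ∈ U, 0 < Yc u v → Yc u w < 0 →
      0 ≤ Xc u w * Yc u v - Yc u w * Xc u v := by
    intro v hv w hw h1 h2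
    by_contra h
    push_neg at h
    exact hsq ⟨v, hv, w, hw, span_triple hu2 h1 h2 h⟩
  have hAne : ∃ v ∈ U, 0 < Yc u v := by
    by_contra h
    push_neg at h
    have hf : ∀ v ∈ U, 0 ≤ (inner ℝ v (mk2 (-(u 1)) (u 0)) : ℝ) := by
      intro v hv
      rw [inner2, mk2_zero, mk2_one]
      have h2 := h v hv
      unfold Yc at h2
      linarith
    have h2 := pos_inner_nonneg hf
      (show mk2 (u 1) (-(u 0)) ∈ pos U from by rw [hpos]; trivial)
    rw [inner2, mk2_zero, mk2_one, mk2_zero, mk2_one] at h2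
    nlinarith [h2, hu2]
  obtain ⟨p, hpU, hpY⟩ := hAne
  obtain ⟨m, hmS, hmin⟩ := Set.exists_min_image {v ∈ U | 0 < Yc u v} (Xc u)
    (hfin.subset (fun x hx => hx.1)) ⟨p, hpU, hpY⟩
  obtain ⟨hmU, hmY⟩ := hmS
  set c : V2 := mk2 (Yc u m * u 0 - Xc u m * u 1) (Yc u m * u 1 + Xc u m * u 0) with hcdef
  have hc0 : c 0 = Yc u m * u 0 - Xc u m * u 1 := rfl
  have hc1 : c 1 = Yc u m * u 1 + Xc u m * u 0 := rfl
  have hinnerc : ∀ v : V2, (inner ℝ v c : ℝ) = Xc u v * Yc u m - Yc u v * Xc u m := by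
    intro v
    rw [inner2, hc0, hc1]
    unfold Xc Yc
    ring
  have hm2 : Xc u m ^ 2 + Yc u m ^ 2 = 1 := lagrange hu2 (unit_sq (hunit m hmU))
  have hcc : (inner ℝ c c : ℝ) = 1 := by
    rw [inner2, hc0, hc1]
    linear_combination (Xc u m ^ 2 + Yc u m ^ 2) * hu2 + hm2
  have hcunit : ‖c‖ = 1 := by
    have h2 : (inner ℝ c c : ℝ) = ‖c‖ ^ 2 := real_inner_self_eq_norm_sq c
    have h3 : (‖c‖ - 1) * (‖c‖ + 1) = 0 := by nlinarith [hcc, h2]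
    rcases mul_eq_zero.1 h3 with h4 | h4
    · linarith
    · linarith [norm_nonneg c]
  have hmain : ∀ v ∈ U, v ≠ -u → 0 ≤ (inner ℝ v c : ℝ) := by
    intro v hv hne
    rw [hinnerc]
    have hv2 : v 0 ^ 2 + v 1 ^ 2 = 1 := unit_sq (hunit v hv)
    have hXv2 : Xc u v ^ 2 + Yc u v ^ 2 = 1 := lagrange hu2 hv2
    rcases lt_trichotomy (Yc u v) 0 with h | h | h
    · exact hstar m hmU v hv hmY h
    · have h1 : (Xc u v - 1) * (Xc u v + 1) = 0 := by nlinarith [hXv2, h]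
      rcases mul_eq_zero.1 h1 with h2 | h2
      · have h3 : Xc u v = 1 := by linarith
        rw [h3, h]
        nlinarith [hmY]
      · exact absurd (negu_of hu2 h (by linarith)) hne
    · exact tri hXv2 hm2 h hmY (hmin v ⟨hv, h⟩)
  have hXnu : Xc u (-u) = -1 := by
    have e0 : (-u : V2) 0 = -(u 0) := rfl
    have e1 : (-u : V2) 1 = -(u 1) := rfl
    unfold Xc
    rw [e0, e1]
    linear_combination (-1 : ℝ) * hu2
  have hYnu : Yc u (-u) = 0 := by
    have e0 : (-u : V2) 0 = -(u 0) := rfl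
    have e1 : (-u : V2) 1 = -(u 1) := rfl
    unfold Yc
    rw [e0, e1]
    ring
  have hnegu : (inner ℝ (-u : V2) c : ℝ) < 0 := by
    rw [hinnerc, hXnu, hYnu]
    nlinarith [hmY]
  have hneguU : -u ∈ U := by
    by_contra hcon
    have hall : ∀ v ∈ U, 0 ≤ (inner ℝ v c : ℝ) :=
      fun v hv => hmain v hv (fun he => hcon (he ▸ hv))
    have h2 := pos_inner_nonneg hall (show -c ∈ pos U from by rw [hpos]; trivial)
    rw [inner_neg_left, hcc] at h2
    linarith
  refine ⟨⟨c, hcunit, ?_⟩, hneguU⟩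
  ext z
  simp only [Set.mem_inter_iff, Set.mem_setOf_eq, Set.mem_singleton_iff]
  constructor
  · rintro ⟨hzU, hzc⟩
    by_contra hne
    exact absurd (hmain z hzU hne) (not_le.mpr hzc)
  · intro hz
    subst hz
    exact ⟨hneguU, hnegu⟩
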